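/- Set d = 2·α12·α21·(v2 − v1)²/α³. There exist real constants d10 and d20 such that d1(t) − d·t → d10 and d2(t) − d·t → d20 as t → ∞ (i.e. d_i(t) = d·t + d_{i0} + o(1)); in particular d1(t)/t → d and d2(t)/t → d. -/

import Mathlib

open Real Filter

lemma const_of_deriv_zero' (f : ℝ → ℝ) (hf : ∀ t, 0 ≤ t → HasDerivAt f 0 t) :
    ∀ t, 0 ≤ t → f t = f 0 := by
  intro t ht
  exact constant_of_has_deriv_right_zero
    (fun x hx => (hf x hx.1).continuousAt.continuousWithinAt)
    (fun x hx => (hf x hx.1).hasDerivWithinAt) t ⟨ht, le_rfl⟩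

/-- With `d = 2 * α12 * α21 * (v2 - v1)^2 / (α12 + α21)^3`, there exist constants
`d10`, `d20` such that `d1 t - d * t → d10` and `d2 t - d * t → d20` as `t → ∞`;
in particular `d1 t / t → d` and `d2 t / t → d`. -/
theorem stmt_7 (v1 v2 α12 α21 : ℝ) (h12 : 0 < α12) (h21 : 0 < α21)
    (a1 a2 d1 d2 : ℝ → ℝ)
    (h1 : ∀ t : ℝ, 0 ≤ t → HasDerivAt a1 (v1 + α12 * (a2 t - a1 t)) t)
    (h2 : ∀ t : ℝ, 0 ≤ t → HasDerivAt a2 (v2 + α21 * (a1 t - a2 t)) t)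
    (h3 : ∀ t : ℝ, 0 ≤ t →
      HasDerivAt d1 (α12 * (d2 t - d1 t) + α12 * (a2 t - a1 t) ^ 2) t)
    (h4 : ∀ t : ℝ, 0 ≤ t →
      HasDerivAt d2 (α21 * (d1 t - d2 t) + α21 * (a1 t - a2 t) ^ 2) t) :
    (∃ d10 d20 : ℝ,
      Filter.Tendsto
        (fun t => d1 t - 2 * α12 * α21 * (v2 - v1) ^ 2 / (α12 + α21) ^ 3 * t)
        Filter.atTop (nhds d10) ∧
      Filter.Tendsto
        (fun t => d2 t - 2 * α12 * α21 * (v2 - v1) ^ 2 / (α12 + α21) ^ 3 * t)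
        Filter.atTop (nhds d20)) ∧
    Filter.Tendsto (fun t => d1 t / t) Filter.atTop
      (nhds (2 * α12 * α21 * (v2 - v1) ^ 2 / (α12 + α21) ^ 3)) ∧
    Filter.Tendsto (fun t => d2 t / t) Filter.atTop
      (nhds (2 * α12 * α21 * (v2 - v1) ^ 2 / (α12 + α21) ^ 3)) := by
  set α := α12 + α21 with hα
  have hαpos : 0 < α := by positivity
  have hαne : α ≠ 0 := ne_of_gt hαpos
  set c := (v2 - v1) / α with hc
  set K := (a2 0 - a1 0) - c with hKdef
  set β := α21 - α12 with hβ
  have hcα : c * α = v2 - v1 := div_mul_cancel₀ _ hαne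
  have hinv : (α12+α21) * ((α12+α21):ℝ)⁻¹ = 1 := mul_inv_cancel₀ (by positivity)
  have hinv2 : (2*(α12+α21)) * ((2*(α12+α21)):ℝ)⁻¹ = 1 := mul_inv_cancel₀ (by positivity)
  -- derivative of exp(-(α t)) and exp(-(2 α t)) and exp(α t)
  have hE1 : ∀ u : ℝ, HasDerivAt (fun x => Real.exp (-(α*x))) (Real.exp (-(α*u)) * (-α)) u := by
    intro u
    simpa using (HasDerivAt.exp (((hasDerivAt_id u).const_mul α).neg))
  have hE2 : ∀ u : ℝ, HasDerivAt (fun x => Real.exp (-(2*α*x))) (Real.exp (-(2*α*u)) * (-(2*α))) u := by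
    intro u
    simpa using (HasDerivAt.exp (((hasDerivAt_id u).const_mul (2*α)).neg))
  have hEA : ∀ u : ℝ, HasDerivAt (fun x => Real.exp (α*x)) (Real.exp (α*u) * α) u := by
    intro u
    simpa using (HasDerivAt.exp ((hasDerivAt_id u).const_mul α))
  -- Step 1: formula for b = a2 - a1
  have hb : ∀ t, 0 ≤ t → a2 t - a1 t = c + K * Real.exp (-(α * t)) := by
    have hz : ∀ s, 0 ≤ s →
        HasDerivAt (fun u => (a2 u - a1 u - c) * Real.exp (α * u)) 0 s := by
      intro s hs
      have hbd : HasDerivAt (fun u => a2 u - a1 u - c)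
          ((v2 + α21 * (a1 s - a2 s)) - (v1 + α12 * (a2 s - a1 s))) s :=
        ((h2 s hs).sub (h1 s hs)).sub_const c
      have := hbd.mul (hEA s)
      refine this.congr_deriv (Eq.symm ?_)
      linear_combination (Real.exp (α*s)*(v2-v1)) * hinv
    have hg := const_of_deriv_zero' _ hz
    intro t ht
    have h := hg t ht
    have hprod : Real.exp (-(α * t)) * Real.exp (α * t) = 1 := by
      rw [← Real.exp_add]; simp
    simp only [mul_zero, Real.exp_zero, mul_one] at h
    linear_combination Real.exp (-(α*t)) * h - (a2 t - a1 t - c) * hprod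
  -- Step 2: formula for s = α21 d1 + α12 d2
  have hsform : ∃ S0 : ℝ, ∀ t, 0 ≤ t → α21 * d1 t + α12 * d2 t =
      S0 + 2*α12*α21*(c^2*t - (2*c*K/α)*Real.exp (-(α*t)) - (K^2/(2*α))*Real.exp (-(2*α*t))) := by
    have hz : ∀ u, 0 ≤ u → HasDerivAt (fun x => (α21 * d1 x + α12 * d2 x)
        - 2*α12*α21*(c^2*x - (2*c*K/α)*Real.exp (-(α*x)) - (K^2/(2*α))*Real.exp (-(2*α*x)))) 0 u := by
      intro u hu
      have hds : HasDerivAt (fun x => α21 * d1 x + α12 * d2 x)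
          (α21*(α12 * (d2 u - d1 u) + α12 * (a2 u - a1 u) ^ 2)
           + α12*(α21 * (d1 u - d2 u) + α21 * (a1 u - a2 u) ^ 2)) u :=
        ((h3 u hu).const_mul α21).add ((h4 u hu).const_mul α12)
      have hdF : HasDerivAt (fun x => 2*α12*α21*(c^2*x - (2*c*K/α)*Real.exp (-(α*x))
          - (K^2/(2*α))*Real.exp (-(2*α*x))))
          (2*α12*α21*(c^2*1 - (2*c*K/α)*(Real.exp (-(α*u)) * (-α))
            - (K^2/(2*α))*(Real.exp (-(2*α*u)) * (-(2*α))))) u :=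
        ((((hasDerivAt_id u).const_mul (c^2)).sub ((hE1 u).const_mul (2*c*K/α))).sub
          ((hE2 u).const_mul (K^2/(2*α)))).const_mul (2*α12*α21)
      have := hds.sub hdF
      refine this.congr_deriv (Eq.symm ?_)
      have hbu := hb u hu
      have hE : Real.exp (-(2*α*u)) = Real.exp (-(α*u)) * Real.exp (-(α*u)) := by
        rw [← Real.exp_add]; ring_nf
      rw [hE]
      linear_combination (-(2*α12*α21*(a2 u - a1 u + c + K*Real.exp (-(α*u))))) * hbu
        + (4*α12*α21*c*K*Real.exp (-(α*u))) * hinv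
        + (2*α12*α21*K^2*(Real.exp (-(α*u)))^2) * hinv2
    have hg := const_of_deriv_zero' _ hz
    refine ⟨(α21 * d1 0 + α12 * d2 0)
        - 2*α12*α21*(c^2*0 - (2*c*K/α)*Real.exp (-(α*0)) - (K^2/(2*α))*Real.exp (-(2*α*0))), ?_⟩
    intro t ht
    have := hg t ht
    linarith
  -- Step 3: formula for e = d2 - d1
  have heform : ∃ E0 : ℝ, ∀ t, 0 ≤ t → d2 t - d1 t =
      E0 * Real.exp (-(α*t)) + β*(c^2/α + 2*c*K*(t*Real.exp (-(α*t)))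
        - (K^2/α)*(Real.exp (-(α*t))*Real.exp (-(α*t)))) := by
    have hz : ∀ u, 0 ≤ u → HasDerivAt (fun x => (d2 x - d1 x) * Real.exp (α*x)
        - β*((c^2/α)*Real.exp (α*x) + 2*c*K*x - (K^2/α)*Real.exp (-(α*x)))) 0 u := by
      intro u hu
      have hde : HasDerivAt (fun x => d2 x - d1 x)
          ((α21 * (d1 u - d2 u) + α21 * (a1 u - a2 u) ^ 2)
           - (α12 * (d2 u - d1 u) + α12 * (a2 u - a1 u) ^ 2)) u := (h4 u hu).sub (h3 u hu)
      have hdH : HasDerivAt (fun x => (d2 x - d1 x) * Real.exp (α*x)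
          - β*((c^2/α)*Real.exp (α*x) + 2*c*K*x - (K^2/α)*Real.exp (-(α*x))))
          ((((α21 * (d1 u - d2 u) + α21 * (a1 u - a2 u) ^ 2)
           - (α12 * (d2 u - d1 u) + α12 * (a2 u - a1 u) ^ 2)) * Real.exp (α*u)
            + (d2 u - d1 u) * (Real.exp (α*u) * α))
           - β*((c^2/α)*(Real.exp (α*u) * α) + 2*c*K*1 - (K^2/α)*(Real.exp (-(α*u)) * (-α)))) u :=
        (hde.mul (hEA u)).sub (((((hEA u).const_mul (c^2/α)).add
          ((hasDerivAt_id u).const_mul (2*c*K))).sub ((hE1 u).const_mul (K^2/α))).const_mul β)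
      convert hdH using 1
      have hbu := hb u hu
      have hprod : Real.exp (-(α * u)) * Real.exp (α * u) = 1 := by
        rw [← Real.exp_add]; simp
      linear_combination (-(β*(a2 u - a1 u + c + K*Real.exp (-(α*u)))*Real.exp (α*u))) * hbu
        - (β*(2*c*K + K^2*Real.exp (-(α*u)))) * hprod
        + (β*(c^2*Real.exp (α*u) + K^2*Real.exp (-(α*u)))) * hinv
    have hg := const_of_deriv_zero' _ hz
    refine ⟨(d2 0 - d1 0) * Real.exp (α*0)
      - β*((c^2/α)*Real.exp (α*0) + 2*c*K*0 - (K^2/α)*Real.exp (-(α*0))), ?_⟩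
    intro t ht
    have h := hg t ht
    have hprod : Real.exp (-(α * t)) * Real.exp (α * t) = 1 := by
      rw [← Real.exp_add]; simp
    linear_combination Real.exp (-(α*t)) * h - ((d2 t - d1 t) - β*c^2/α) * hprod
  obtain ⟨S0, hS⟩ := hsform
  obtain ⟨E0, hEf⟩ := heform
  -- basic limits
  have hmulTop : Tendsto (fun t:ℝ => α*t) atTop atTop := tendsto_id.const_mul_atTop hαpos
  have hT1 : Tendsto (fun t:ℝ => Real.exp (-(α*t))) atTop (nhds 0) :=
    (Real.tendsto_exp_atBot.comp (tendsto_neg_atTop_atBot.comp hmulTop)).congr fun t => rfl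
  have hT2 : Tendsto (fun t:ℝ => Real.exp (-(2*α*t))) atTop (nhds 0) := by
    have h2 : Tendsto (fun t:ℝ => (2*α)*t) atTop atTop := tendsto_id.const_mul_atTop (by positivity)
    exact (Real.tendsto_exp_atBot.comp (tendsto_neg_atTop_atBot.comp h2)).congr fun t => rfl
  have hT3 : Tendsto (fun t:ℝ => t * Real.exp (-(α*t))) atTop (nhds 0) := by
    have h := (tendsto_pow_mul_exp_neg_atTop_nhds_zero 1).comp hmulTop
    have h2 := h.const_mul (α⁻¹)
    rw [mul_zero] at h2
    refine h2.congr fun t => ?_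
    simp only [Function.comp, pow_one]
    field_simp
  -- limit of s-part
  have hslim : Tendsto (fun t => (α21 * d1 t + α12 * d2 t) - 2*α12*α21*c^2*t)
      atTop (nhds S0) := by
    have base : Tendsto (fun t => S0 + 2*α12*α21*((-(2*c*K/α))*Real.exp (-(α*t))
        - (K^2/(2*α))*Real.exp (-(2*α*t)))) atTop
        (nhds (S0 + 2*α12*α21*((-(2*c*K/α))*0 - (K^2/(2*α))*0))) :=
      tendsto_const_nhds.add (((hT1.const_mul (-(2*c*K/α))).sub
        (hT2.const_mul (K^2/(2*α)))).const_mul (2*α12*α21))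
    rw [show S0 + 2*α12*α21*((-(2*c*K/α))*0 - (K^2/(2*α))*0) = S0 by ring] at base
    refine base.congr' ?_
    filter_upwards [eventually_ge_atTop (0:ℝ)] with t ht
    have := hS t ht
    linear_combination -this
  -- limit of e-part
  have helim : Tendsto (fun t => d2 t - d1 t) atTop (nhds (β*c^2/α)) := by
    have base : Tendsto (fun t => E0 * Real.exp (-(α*t)) + β*(c^2/α
        + 2*c*K*(t*Real.exp (-(α*t))) - (K^2/α)*(Real.exp (-(α*t))*Real.exp (-(α*t)))))
        atTop (nhds (E0 * 0 + β*(c^2/α + 2*c*K*0 - (K^2/α)*(0*0)))) :=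
      (hT1.const_mul E0).add ((((tendsto_const_nhds :
          Tendsto (fun _:ℝ => c^2/α) atTop (nhds (c^2/α))).add
        (hT3.const_mul (2*c*K))).sub ((hT1.mul hT1).const_mul (K^2/α))).const_mul β)
    rw [show E0 * 0 + β*(c^2/α + 2*c*K*0 - (K^2/α)*(0*0)) = β*c^2/α by ring] at base
    refine base.congr' ?_
    filter_upwards [eventually_ge_atTop (0:ℝ)] with t ht
    exact (hEf t ht).symm
  -- rewrite the goal constant
  have hgc : 2 * α12 * α21 * (v2 - v1) ^ 2 / α ^ 3 = 2*α12*α21*c^2/α := by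
    rw [hc, div_eq_div_iff (pow_ne_zero 3 hαne) hαne]
    linear_combination (-(2*α12*α21*(v2-v1)^2*α*(α*α⁻¹+1))) * hinv
  simp only [hgc]
  -- limits for d1, d2
  have hd1lim : Tendsto (fun t => d1 t - 2*α12*α21*c^2/α*t) atTop
      (nhds ((S0 - α12*(β*c^2/α))/α)) := by
    have base := (hslim.sub (helim.const_mul α12)).div_const α
    refine base.congr fun t => ?_
    linear_combination (d1 t) * hinv
  have hd2lim : Tendsto (fun t => d2 t - 2*α12*α21*c^2/α*t) atTop
      (nhds ((S0 + α21*(β*c^2/α))/α)) := by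
    have base := (hslim.add (helim.const_mul α21)).div_const α
    refine base.congr fun t => ?_
    linear_combination (d2 t) * hinv
  refine ⟨⟨_, _, hd1lim, hd2lim⟩, ?_, ?_⟩
  · have base := (hd1lim.div_atTop tendsto_id).add
      (tendsto_const_nhds : Tendsto (fun _:ℝ => 2*α12*α21*c^2/α) atTop (nhds (2*α12*α21*c^2/α)))
    rw [zero_add] at base
    simp only [id_eq] at base
    refine base.congr' ?_
    filter_upwards [eventually_gt_atTop (0:ℝ)] with t ht
    have htinv : t * t⁻¹ = 1 := mul_inv_cancel₀ (ne_of_gt ht)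
    linear_combination (-(2*α12*α21*c^2/α)) * htinv
  · have base := (hd2lim.div_atTop tendsto_id).add
      (tendsto_const_nhds : Tendsto (fun _:ℝ => 2*α12*α21*c^2/α) atTop (nhds (2*α12*α21*c^2/α)))
    rw [zero_add] at base
    simp only [id_eq] at base
    refine base.congr' ?_
    filter_upwards [eventually_gt_atTop (0:ℝ)] with t ht
    have htinv : t * t⁻¹ = 1 := mul_inv_cancel₀ (ne_of_gt ht)
    linear_combination (-(2*α12*α21*c^2/α)) * htinv
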